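/- An algebra A is derived discrete if and only if for every r ∈ ℕ there are, up to shift and isomorphism, only finitely many indecomposable objects X• ∈ D^b(A) with cohomological range hr(X•) = r. -/
import Mathlib


/-!
STATEMENT 12: An algebra `A` is derived discrete (for every finitely supported
cohomology dimension vector `d` there are only finitely many indecomposable objects of
`D^b(mod A)` with that cohomology dimension vector, up to isomorphism) if and only if for
every `r ∈ ℕ` there are, up to shift and isomorphism, only finitely many indecomposable
objects `X ∈ D^b(mod A)` with cohomological range `hr(X) = r`.
-/

open CategoryTheory Limits

universe u
variable (k : Type u) [Field k] [IsAlgClosed k]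

section Defs

variable (R : Type u) [Ring R] [Algebra k R] [FiniteDimensional k R]
  [HasDerivedCategory.{u} (ModuleCat.{u} R)]

/-- The `i`-th cohomology of an object of the derived category. -/
noncomputable def Hobj (i : ℤ) (X : DerivedCategory (ModuleCat.{u} R)) : ModuleCat R :=
  (DerivedCategory.homologyFunctor (ModuleCat R) i).obj X

/-- `dim_k H^i(X)`. -/
noncomputable def hdim (i : ℤ) (X : DerivedCategory (ModuleCat.{u} R)) : ℕ :=
  Module.finrank k ((ModuleCat.restrictScalars (algebraMap k R)).obj (Hobj R i X))

/-- The cohomological length `hl(X) = max_i dim_k H^i(X)`. -/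
noncomputable def hl (X : DerivedCategory (ModuleCat.{u} R)) : ℕ :=
  sSup (Set.range fun i : ℤ => hdim k R i X)

/-- The cohomological width `hw(X) = max { j - i + 1 | H^i(X) ≠ 0 ≠ H^j(X) }`. -/
noncomputable def hw (X : DerivedCategory (ModuleCat.{u} R)) : ℕ :=
  sSup {n : ℕ | ∃ i j : ℤ, ¬ IsZero (Hobj R i X) ∧ ¬ IsZero (Hobj R j X) ∧ (n : ℤ) = j - i + 1}

/-- The cohomological range `hr(X) = hw(X) · hl(X)`. -/
noncomputable def hr (X : DerivedCategory (ModuleCat.{u} R)) : ℕ := hw R X * hl k R X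

/-- An object of an additive category is indecomposable iff it is nonzero and its only
idempotent endomorphisms are `0` and the identity. -/
def Indec {D : Type*} [Category D] [Limits.HasZeroMorphisms D] (X : D) : Prop :=
  ¬ IsZero X ∧ ∀ e : X ⟶ X, e ≫ e = e → e = 0 ∨ e = 𝟙 X

/-- `X` has bounded cohomology, i.e. `X` lies in `D^b`. -/
def Bdd (X : DerivedCategory (ModuleCat.{u} R)) : Prop :=
  ∃ a b : ℤ, ∀ i : ℤ, (i < a ∨ b < i) → IsZero (Hobj R i X)

/-- All cohomologies of `X` are finite dimensional over `k`, i.e. `X` lies in the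
bounded derived category of finite-dimensional modules. -/
def FinCoh (X : DerivedCategory (ModuleCat.{u} R)) : Prop :=
  ∀ i : ℤ, FiniteDimensional k
    ((ModuleCat.restrictScalars (algebraMap k R)).obj (Hobj R i X))

/-- Objects of `D^b(mod R)` (bounded, finite-dimensional cohomology). -/
def InDb (X : DerivedCategory (ModuleCat.{u} R)) : Prop := Bdd R X ∧ FinCoh k R X

/-- The global cohomological length `gl.hl R`, as a value in `ℕ∞`. -/
noncomputable def glhl : ℕ∞ :=
  ⨆ X : {X : DerivedCategory (ModuleCat.{u} R) // Indec X ∧ InDb k R X}, (hl k R X.1 : ℕ∞)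

/-- The global cohomological width `gl.hw R`, as a value in `ℕ∞`. -/
noncomputable def glhw : ℕ∞ :=
  ⨆ X : {X : DerivedCategory (ModuleCat.{u} R) // Indec X ∧ InDb k R X}, (hw R X.1 : ℕ∞)

/-- The global cohomological range `gl.hr R`, as a value in `ℕ∞`. -/
noncomputable def glhr : ℕ∞ :=
  ⨆ X : {X : DerivedCategory (ModuleCat.{u} R) // Indec X ∧ InDb k R X}, (hr k R X.1 : ℕ∞)

/-- `R` is strongly derived unbounded: there is an infinite strictly increasing sequence
`(rᵢ)` such that for each `i` there are infinitely many indecomposable objects of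
`D^b(mod R)` of cohomological range `rᵢ`, pairwise distinct up to shift and isomorphism. -/
def StronglyDerivedUnbounded : Prop :=
  ∃ r : ℕ → ℕ, StrictMono r ∧ ∀ i : ℕ, ∃ X : ℕ → DerivedCategory (ModuleCat.{u} R),
    (∀ j : ℕ, Indec (X j) ∧ InDb k R (X j) ∧ hr k R (X j) = r i) ∧
    (∀ j j' : ℕ, j ≠ j' → ∀ n : ℤ, IsEmpty (X j ≅ (X j')⟦n⟧))

end Defs

/-- `A` is derived discrete. -/
def DerivedDiscrete (A : Type u) [Ring A] [Algebra k A] [FiniteDimensional k A]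
    [HasDerivedCategory.{u} (ModuleCat.{u} A)] : Prop :=
  ∀ d : ℤ →₀ ℕ, ∃ (ι : Type u) (_ : Finite ι)
    (rep : ι → DerivedCategory (ModuleCat.{u} A)),
    ∀ X : DerivedCategory (ModuleCat.{u} A),
      Indec X → InDb k A X → (∀ n : ℤ, hdim k A n X = d n) →
      ∃ i : ι, Nonempty (X ≅ rep i)

section Aux

open ZeroObject

variable {k : Type u} [Field k] [IsAlgClosed k]
variable {R : Type u} [Ring R] [Algebra k R] [FiniteDimensional k R]
  [HasDerivedCategory.{u} (ModuleCat.{u} R)]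

/-- Shift compatibility for `Hobj`. -/
noncomputable def auxHobjShift (X : DerivedCategory (ModuleCat.{u} R)) (n i i' : ℤ)
    (h : n + i = i') : Hobj R i (X⟦n⟧) ≅ Hobj R i' X :=
  ((DerivedCategory.homologyFunctor (ModuleCat.{u} R) 0).shiftIso n i i' h).app X

lemma aux_isZero_iff (X : DerivedCategory (ModuleCat.{u} R)) :
    IsZero X ↔ ∀ n : ℤ, IsZero (Hobj R n X) := by
  constructor
  · intro h n
    exact (DerivedCategory.homologyFunctor _ n).map_isZero h
  · intro h
    have : (DerivedCategory.Q (C := ModuleCat.{u} R)).EssSurj :=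
      Localization.essSurj _ (HomologicalComplex.quasiIso _ (ComplexShape.up ℤ))
    obtain ⟨K, ⟨e⟩⟩ : ∃ K, Nonempty (DerivedCategory.Q.obj K ≅ X) :=
      ⟨_, ⟨DerivedCategory.Q.objObjPreimageIso X⟩⟩
    have hK : ∀ n : ℤ, IsZero (K.homology n) := fun n =>
      (((DerivedCategory.homologyFunctorFactors (ModuleCat.{u} R) n).app K).isZero_iff).mp
        (((DerivedCategory.homologyFunctor _ n).mapIso e).isZero_iff.mpr (h n))
    have : QuasiIso (0 : K ⟶ 0) := by
      rw [quasiIso_iff]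
      intro n
      rw [quasiIsoAt_iff_isIso_homologyMap]
      have hz : IsZero ((0 : CochainComplex (ModuleCat.{u} R) ℤ).homology n) :=
        (HomologicalComplex.homologyFunctor _ (ComplexShape.up ℤ) n).map_isZero (isZero_zero _)
      exact ⟨0, (hK n).eq_of_src _ _, hz.eq_of_src _ _⟩
    have hz0 : IsZero (DerivedCategory.Q.obj (0 : CochainComplex (ModuleCat.{u} R) ℤ)) :=
      DerivedCategory.Q.map_isZero (isZero_zero _)
    exact (e.symm ≪≫ asIso (DerivedCategory.Q.map (0 : K ⟶ 0))).isZero_iff.mpr hz0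

lemma aux_subsingleton_of_isZero {M : ModuleCat.{u} R} (h : IsZero M) : Subsingleton M := by
  have hid : (𝟙 M : M ⟶ M) = 0 := h.eq_of_src _ _
  refine ⟨fun a b => ?_⟩
  have ha : a = (0 : M ⟶ M) a := by rw [← hid]; rfl
  have hb : b = (0 : M ⟶ M) b := by rw [← hid]; rfl
  rw [ha, hb]
  rfl

lemma aux_hdim_eq_zero_of_isZero {i : ℤ} {X : DerivedCategory (ModuleCat.{u} R)}
    (h : IsZero (Hobj R i X)) : hdim k R i X = 0 := by
  have hs : Subsingleton (Hobj R i X) := aux_subsingleton_of_isZero h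
  haveI : Subsingleton ((ModuleCat.restrictScalars (algebraMap k R)).obj (Hobj R i X)) := hs
  exact Module.finrank_zero_of_subsingleton

lemma aux_not_isZero_of_hdim {i : ℤ} {X : DerivedCategory (ModuleCat.{u} R)}
    (h : hdim k R i X ≠ 0) : ¬ IsZero (Hobj R i X) :=
  fun hz => h (aux_hdim_eq_zero_of_isZero hz)

lemma aux_hdim_ne_zero {i : ℤ} {X : DerivedCategory (ModuleCat.{u} R)}
    (hfd : FiniteDimensional k ((ModuleCat.restrictScalars (algebraMap k R)).obj (Hobj R i X)))
    (h : ¬ IsZero (Hobj R i X)) : hdim k R i X ≠ 0 := by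
  intro h0
  have hs : Subsingleton ((ModuleCat.restrictScalars (algebraMap k R)).obj (Hobj R i X)) :=
    Module.finrank_zero_iff.mp h0
  haveI : Subsingleton (Hobj R i X) := hs
  exact h (ModuleCat.isZero_of_subsingleton _)

lemma aux_finrank_congr {M N : ModuleCat.{u} R} (e : M ≅ N) :
    Module.finrank k ((ModuleCat.restrictScalars (algebraMap k R)).obj M)
      = Module.finrank k ((ModuleCat.restrictScalars (algebraMap k R)).obj N) :=
  ((ModuleCat.restrictScalars (algebraMap k R)).mapIso e).toLinearEquiv.finrank_eq

lemma aux_findim_congr {M N : ModuleCat.{u} R} (e : M ≅ N)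
    (h : FiniteDimensional k ((ModuleCat.restrictScalars (algebraMap k R)).obj M)) :
    FiniteDimensional k ((ModuleCat.restrictScalars (algebraMap k R)).obj N) :=
  @LinearEquiv.finiteDimensional _ _ _ _ _ _ _ _
    ((ModuleCat.restrictScalars (algebraMap k R)).mapIso e).toLinearEquiv h

lemma aux_hdim_congr {X Y : DerivedCategory (ModuleCat.{u} R)} (e : X ≅ Y) (i : ℤ) :
    hdim k R i X = hdim k R i Y :=
  aux_finrank_congr ((DerivedCategory.homologyFunctor _ i).mapIso e)

lemma aux_hdim_shift (X : DerivedCategory (ModuleCat.{u} R)) (n i : ℤ) :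
    hdim k R i (X⟦n⟧) = hdim k R (n + i) X :=
  aux_finrank_congr (auxHobjShift X n i _ rfl)

lemma aux_isZero_shift (X : DerivedCategory (ModuleCat.{u} R)) (n i : ℤ) :
    IsZero (Hobj R i (X⟦n⟧)) ↔ IsZero (Hobj R (n + i) X) :=
  (auxHobjShift X n i _ rfl).isZero_iff

lemma aux_indec_shift (X : DerivedCategory (ModuleCat.{u} R)) (n : ℤ) (h : Indec X) :
    Indec (X⟦n⟧) := by
  set F := shiftFunctor (DerivedCategory (ModuleCat.{u} R)) n with hF
  constructor
  · intro hz
    apply h.1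
    rw [IsZero.iff_id_eq_zero] at hz ⊢
    apply F.map_injective
    rw [F.map_id, F.map_zero]
    exact hz
  · intro e he
    obtain ⟨e', rfl⟩ := F.map_surjective e
    have he' : e' ≫ e' = e' := F.map_injective (by rw [F.map_comp]; exact he)
    rcases h.2 e' he' with h0 | h1
    · left; rw [h0, F.map_zero]
    · right; rw [h1, F.map_id]

lemma aux_indb_shift (X : DerivedCategory (ModuleCat.{u} R)) (n : ℤ) (h : InDb k R X) :
    InDb k R (X⟦n⟧) := by
  obtain ⟨⟨a, b, hab⟩, hfc⟩ := h
  refine ⟨⟨a - n, b - n, fun i hi => ?_⟩, fun i => ?_⟩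
  · rw [aux_isZero_shift]
    apply hab
    omega
  · exact aux_findim_congr (auxHobjShift X n i _ rfl).symm (hfc (n + i))

lemma aux_bddAbove_range (X : DerivedCategory (ModuleCat.{u} R)) (h : Bdd R X) :
    BddAbove (Set.range fun i : ℤ => hdim k R i X) := by
  obtain ⟨a, b, hab⟩ := h
  apply Set.Finite.bddAbove
  apply Set.Finite.subset (((Set.finite_Icc a b).image fun i => hdim k R i X).insert 0)
  rintro x ⟨i, rfl⟩
  by_cases hi : i ∈ Set.Icc a b
  · exact Set.mem_insert_iff.mpr (Or.inr ⟨i, hi, rfl⟩)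
  · have : hdim k R i X = 0 := by
      apply aux_hdim_eq_zero_of_isZero
      apply hab
      simp only [Set.mem_Icc] at hi
      omega
    exact Set.mem_insert_iff.mpr (Or.inl this)

lemma aux_hdim_le_hl (X : DerivedCategory (ModuleCat.{u} R)) (h : Bdd R X) (i : ℤ) :
    hdim k R i X ≤ hl k R X :=
  le_csSup (aux_bddAbove_range X h) ⟨i, rfl⟩

lemma aux_bddAbove_S (X : DerivedCategory (ModuleCat.{u} R)) (h : Bdd R X) :
    BddAbove {n : ℕ | ∃ i j : ℤ, ¬ IsZero (Hobj R i X) ∧ ¬ IsZero (Hobj R j X) ∧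
      (n : ℤ) = j - i + 1} := by
  obtain ⟨a, b, hab⟩ := h
  refine ⟨(b - a + 1).toNat, ?_⟩
  rintro n ⟨i, j, hi, hj, hn⟩
  have hia : a ≤ i ∧ i ≤ b := by
    by_contra hc
    exact hi (hab i (by omega))
  have hja : a ≤ j ∧ j ≤ b := by
    by_contra hc
    exact hj (hab j (by omega))
  omega

lemma aux_width_le_hw (X : DerivedCategory (ModuleCat.{u} R)) (h : Bdd R X) {i j : ℤ}
    (hi : ¬ IsZero (Hobj R i X)) (hj : ¬ IsZero (Hobj R j X)) (hij : i ≤ j) :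
    j - i + 1 ≤ (hw R X : ℤ) := by
  have hmem : (j - i + 1).toNat ∈ {n : ℕ | ∃ i j : ℤ, ¬ IsZero (Hobj R i X) ∧
      ¬ IsZero (Hobj R j X) ∧ (n : ℤ) = j - i + 1} := ⟨i, j, hi, hj, by omega⟩
  have := le_csSup (aux_bddAbove_S X h) hmem
  unfold hw
  omega

lemma aux_one_le_hw (X : DerivedCategory (ModuleCat.{u} R)) (h : Bdd R X)
    (hnz : ¬ IsZero X) : 1 ≤ hw R X := by
  obtain ⟨i, hi⟩ : ∃ i, ¬ IsZero (Hobj R i X) := by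
    by_contra hc
    push_neg at hc
    exact hnz ((aux_isZero_iff X).mpr hc)
  have := aux_width_le_hw X h hi hi le_rfl
  omega

lemma aux_one_le_hl (X : DerivedCategory (ModuleCat.{u} R)) (h : InDb k R X)
    (hnz : ¬ IsZero X) : 1 ≤ hl k R X := by
  obtain ⟨i, hi⟩ : ∃ i, ¬ IsZero (Hobj R i X) := by
    by_contra hc
    push_neg at hc
    exact hnz ((aux_isZero_iff X).mpr hc)
  have h1 := aux_hdim_ne_zero (h.2 i) hi
  have h2 := aux_hdim_le_hl (k := k) X h.1 i
  omega

lemma aux_finite_Dset (s : Finset ℤ) (r : ℕ) :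
    {d : ℤ →₀ ℕ | d.support ⊆ s ∧ ∀ n, d n ≤ r}.Finite := by
  classical
  set D := {d : ℤ →₀ ℕ | d.support ⊆ s ∧ ∀ n, d n ≤ r} with hD
  apply Set.Finite.of_finite_image (f := fun (d : ℤ →₀ ℕ) (x : {x : ℤ // x ∈ s}) =>
    (⟨min (d x.1) r, by omega⟩ : Fin (r + 1)))
  · exact Set.toFinite _
  · rintro d hd d' hd' hf
    ext n
    by_cases hn : n ∈ s
    · have := congrFun hf ⟨n, hn⟩
      simp only [Fin.mk.injEq] at this
      have h1 := hd.2 n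
      have h2 := hd'.2 n
      omega
    · have h1 : d n = 0 := Finsupp.notMem_support_iff.mp (fun hc => hn (hd.1 hc))
      have h2 : d' n = 0 := Finsupp.notMem_support_iff.mp (fun hc => hn (hd'.1 hc))
      rw [h1, h2]

lemma aux_shift_unique (d : ℤ →₀ ℕ) (hd : d ≠ 0) (n n' : ℤ)
    (h : ∀ j : ℤ, d (j - n) = d (j - n')) : n = n' := by
  by_contra hne
  have hsupp : d.support.Nonempty := Finsupp.support_nonempty_iff.mpr hd
  set s := d.support.max' hsupp with hs
  have hsm : d s ≠ 0 := Finsupp.mem_support_iff.mp (d.support.max'_mem hsupp)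
  have key : ∀ j : ℤ, d j = d (j + (n - n')) := by
    intro j
    have := h (j + n)
    have e1 : j + n - n = j := by ring
    have e2 : j + n - n' = j + (n - n') := by ring
    rw [e1, e2] at this
    exact this
  have key' : ∀ j : ℤ, d (j - (n - n')) = d j := by
    intro j
    have := key (j - (n - n'))
    rw [sub_add_cancel] at this
    exact this
  rcases lt_or_gt_of_ne (sub_ne_zero.mpr hne) with ht | ht
  · -- n - n' < 0; then s - (n - n') > s and d there nonzero
    have : d (s - (n - n')) ≠ 0 := by rw [key']; exact hsm
    have hmem : s - (n - n') ∈ d.support := Finsupp.mem_support_iff.mpr this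
    have := d.support.le_max' _ hmem
    omega
  · have : d (s + (n - n')) ≠ 0 := by rw [← key]; exact hsm
    have hmem : s + (n - n') ∈ d.support := Finsupp.mem_support_iff.mpr this
    have := d.support.le_max' _ hmem
    omega

end Aux

theorem derivedDiscrete_iff_finitely_many_of_each_range
    (A : Type u) [Ring A] [Algebra k A] [FiniteDimensional k A]
    [HasDerivedCategory.{u} (ModuleCat.{u} A)] :
    DerivedDiscrete k A ↔
      ∀ r : ℕ, ∃ (ι : Type u) (_ : Finite ι)
        (rep : ι → DerivedCategory (ModuleCat.{u} A)),
        ∀ X : DerivedCategory (ModuleCat.{u} A),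
          Indec X → InDb k A X → hr k A X = r →
          ∃ (i : ι) (n : ℤ), Nonempty (X ≅ (rep i)⟦n⟧) := by
  constructor
  · intro hDD r
    classical
    choose ι fin rep hrep using hDD
    set D : Set (ℤ →₀ ℕ) :=
      {d | d.support ⊆ Finset.Icc (0 : ℤ) ((r : ℤ) - 1) ∧ ∀ n, d n ≤ r} with hDdef
    have hDfin : D.Finite := aux_finite_Dset _ r
    haveI := hDfin.to_subtype
    haveI : ∀ d : D, Finite (ι d.1) := fun d => fin d.1
    refine ⟨Σ d : D, ι d.1, inferInstance, fun p => rep p.1.1 p.2, ?_⟩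
    intro X hind hdb hhr
    have hnz : ¬ IsZero X := hind.1
    obtain ⟨i0, hi0⟩ : ∃ i, ¬ IsZero (Hobj A i X) := by
      by_contra hc
      push_neg at hc
      exact hnz ((aux_isZero_iff X).mpr hc)
    obtain ⟨a, b, hab⟩ := hdb.1
    obtain ⟨m, hm, hmin⟩ := Int.exists_least_of_bdd (P := fun i => ¬ IsZero (Hobj A i X))
      ⟨a, fun z hz => by by_contra hc; exact hz (hab z (by omega))⟩ ⟨i0, hi0⟩
    have h1l : 1 ≤ hl k A X := aux_one_le_hl X hdb hnz
    have h1w : 1 ≤ hw A X := aux_one_le_hw X hdb.1 hnz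
    have hwr : hw A X ≤ r := by
      rw [← hhr]
      exact Nat.le_mul_of_pos_right _ h1l
    have hlr : hl k A X ≤ r := by
      rw [← hhr]
      exact Nat.le_mul_of_pos_left _ h1w
    set f : ℤ → ℕ := fun n => hdim k A n (X⟦m⟧) with hfdef
    have hfsupp : ∀ n, f n ≠ 0 → n ∈ Finset.Icc (0 : ℤ) ((r : ℤ) - 1) := by
      intro n hn
      have hn' : hdim k A (m + n) X ≠ 0 := by
        rw [← aux_hdim_shift (k := k) X m n]
        exact hn
      have hnz' : ¬ IsZero (Hobj A (m + n) X) := aux_not_isZero_of_hdim hn'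
      have hge := hmin _ hnz'
      have hwl := aux_width_le_hw X ⟨a, b, hab⟩ hm hnz' (by omega)
      simp only [Finset.mem_Icc]
      omega
    set d : ℤ →₀ ℕ := Finsupp.onFinset _ f hfsupp with hddef
    have hdD : d ∈ D := by
      constructor
      · exact Finsupp.support_onFinset_subset
      · intro n
        have : d n = hdim k A (m + n) X := by
          rw [hddef, Finsupp.onFinset_apply, hfdef]
          exact aux_hdim_shift (k := k) X m n
        rw [this]
        exact le_trans (aux_hdim_le_hl X ⟨a, b, hab⟩ (m + n)) hlr
    obtain ⟨i, ⟨e⟩⟩ := hrep d (X⟦m⟧) (aux_indec_shift X m hind) (aux_indb_shift X m hdb)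
      (fun n => rfl)
    exact ⟨⟨⟨d, hdD⟩, i⟩, -m,
      ⟨(shiftEquiv (DerivedCategory (ModuleCat.{u} A)) m).unitIso.app X ≪≫
        (shiftFunctor (DerivedCategory (ModuleCat.{u} A)) (-m)).mapIso e⟩⟩
  · intro hfin d
    classical
    by_cases hd0 : d = 0
    · refine ⟨PEmpty.{u + 1}, inferInstance, fun p => p.elim, ?_⟩
      intro X hind hdb hX
      exfalso
      obtain ⟨i, hi⟩ : ∃ i, ¬ IsZero (Hobj A i X) := by
        by_contra hc
        push_neg at hc
        exact hind.1 ((aux_isZero_iff X).mpr hc)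
      exact aux_hdim_ne_zero (hdb.2 i) hi (by rw [hX i, hd0]; simp)
    · set L := sSup (Set.range fun i : ℤ => (d i : ℕ)) with hL
      set W := sSup {n : ℕ | ∃ i j : ℤ, d i ≠ 0 ∧ d j ≠ 0 ∧ (n : ℤ) = j - i + 1} with hW
      obtain ⟨ι, fin, rep, hrep⟩ := hfin (W * L)
      set N : ι → Set ℤ := fun i => {n | ∀ j : ℤ, hdim k A j (rep i) = d (j - n)} with hN
      refine ⟨ι, fin, fun i => if h : (N i).Nonempty then (rep i)⟦h.choose⟧ else rep i, ?_⟩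
      intro X hind hdb hX
      have hhl : hl k A X = L := by
        unfold hl
        rw [hL]
        have : (fun i : ℤ => hdim k A i X) = fun i : ℤ => (d i : ℕ) := funext hX
        rw [this]
      have hhw : hw A X = W := by
        unfold hw
        rw [hW]
        congr 1
        ext n
        constructor
        · rintro ⟨i, j, hi, hj, hn⟩
          exact ⟨i, j, by rw [← hX i]; exact aux_hdim_ne_zero (hdb.2 i) hi,
            by rw [← hX j]; exact aux_hdim_ne_zero (hdb.2 j) hj, hn⟩
        · rintro ⟨i, j, hi, hj, hn⟩
          exact ⟨i, j, aux_not_isZero_of_hdim (by rw [hX i]; exact hi),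
            aux_not_isZero_of_hdim (by rw [hX j]; exact hj), hn⟩
      obtain ⟨i, n, ⟨e⟩⟩ := hrep X hind hdb (by unfold hr; rw [hhl, hhw])
      have hn : n ∈ N i := by
        intro j
        have h1 : hdim k A (j - n) X = hdim k A (j - n) ((rep i)⟦n⟧) := aux_hdim_congr e _
        rw [aux_hdim_shift] at h1
        have e2 : n + (j - n) = j := by ring
        rw [e2] at h1
        rw [← h1, hX]
      have hne : (N i).Nonempty := ⟨n, hn⟩
      have huniq : hne.choose = n := by
        apply aux_shift_unique d hd0
        intro j
        rw [← hne.choose_spec j, ← hn j]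
      refine ⟨i, ⟨?_⟩⟩
      show X ≅ if h : (N i).Nonempty then (rep i)⟦h.choose⟧ else rep i
      rw [dif_pos hne, huniq]
      exact e
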